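/- For every positive integer $n$, $\sum_{n < p < 2n,\ p \text{ prime}} \log p \leq n \log 4$. -/

import Mathlib

theorem stmt_5 (n : ℕ) (hn : 0 < n) :
    ∑ p ∈ (Finset.Ioo n (2 * n)).filter Nat.Prime, Real.log p ≤ n * Real.log 4 := by
  set s := (Finset.Ioo n (2 * n)).filter Nat.Prime with hs
  have hdvd : (∏ p ∈ s, p) ∣ Nat.choose (2 * n) n := by
    refine Finset.prod_primes_dvd _ (fun p hp => (Finset.mem_filter.1 hp).2.prime) ?_
    intro p hp
    obtain ⟨hmem, hprime⟩ := Finset.mem_filter.1 hp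
    rw [Finset.mem_Ioo] at hmem
    have := hprime.dvd_choose_add hmem.1 hmem.1 (by omega : p ≤ n + n)
    rwa [← two_mul] at this
  have hle : (∏ p ∈ s, p) ≤ 4 ^ n := by
    calc (∏ p ∈ s, p) ≤ Nat.choose (2 * n) n :=
          Nat.le_of_dvd (Nat.choose_pos (by omega)) hdvd
      _ ≤ Nat.choose (2 * n + 1) n := Nat.choose_le_choose n (by omega)
      _ ≤ 4 ^ n := Nat.choose_middle_le_pow n
  have hpos : (0 : ℝ) < ∏ p ∈ s, (p : ℝ) := by
    refine Finset.prod_pos fun p hp => ?_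
    exact_mod_cast (Finset.mem_filter.1 hp).2.pos
  have hlog : ∑ p ∈ s, Real.log p = Real.log (∏ p ∈ s, (p : ℝ)) := by
    rw [Real.log_prod]
    intro p hp
    exact_mod_cast (Finset.mem_filter.1 hp).2.pos.ne'
  rw [hlog]
  have : Real.log (∏ p ∈ s, (p : ℝ)) ≤ Real.log ((4 : ℝ) ^ n) := by
    apply Real.log_le_log hpos
    rw [← Nat.cast_prod]
    exact_mod_cast hle
  simpa [Real.log_pow] using this
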